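/- Let M = (Q, Σ, δ, q₀, F) be a minimal DFA with |Q| = n ≥ 3 and let S ⊆ Q be such that A_S is nonempty and has state complexity Ψ(n, |S|). Then for every subset X ⊆ Q with |X| = |S|, the atom A_X is nonempty. -/

import Mathlib

/-- `Psi n s` of Brzozowski–Tamm: the tight upper bound on the state complexity
of an atom `A_S` with `|S| = s` of a language of state complexity `n`. -/
def Psi (n s : ℕ) : ℕ :=
  if s = 0 ∨ s = n then 2 ^ n - 1
  else 1 + ∑ k ∈ Finset.Icc 1 s, ∑ l ∈ Finset.Icc 1 (n - s),
    Nat.choose n k * Nat.choose (n - k) l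

/-- The Myhill–Nerode right congruence of a language `K`. -/
def rightCong {A : Type*} (K : Set (List A)) : Setoid (List A) where
  r x y := ∀ z, x ++ z ∈ K ↔ y ++ z ∈ K
  iseqv := ⟨fun _ _ => Iff.rfl, fun h z => (h z).symm, fun h1 h2 z => (h1 z).trans (h2 z)⟩

/-- The state complexity of a language: the number of classes of its
Myhill–Nerode right congruence. -/
noncomputable def stateComplexity {A : Type*} (K : Set (List A)) : ℕ :=
  Nat.card (Quotient (rightCong K))

/-- The atom `A_S` of the language of the DFA `M`. -/
def atom {A Q : Type*} (M : DFA A Q) (S : Set Q) : Set (List A) :=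
  {w | ∀ q, M.evalFrom q w ∈ M.accept ↔ q ∈ S}

/-- A DFA is minimal iff all its states are reachable and pairwise distinguishable. -/
def IsMinimal {A Q : Type*} (M : DFA A Q) : Prop :=
  (∀ q, ∃ w : List A, M.evalFrom M.start w = q) ∧
  ∀ p q : Q, p ≠ q → ∃ w : List A,
    ¬(M.evalFrom p w ∈ M.accept ↔ M.evalFrom q w ∈ M.accept)

/-! ### Auxiliary material -/


open Finset in
lemma count_exact {Q : Type*} [Fintype Q] [DecidableEq Q] (k l : ℕ) :
    (Finset.univ.filter fun pr : Finset Q × Finset Q =>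
        pr.1.card = k ∧ pr.2.card = l ∧ Disjoint pr.1 pr.2).card
      = (Fintype.card Q).choose k * ((Fintype.card Q) - k).choose l := by
  classical
  rw [Finset.card_eq_sum_card_fiberwise
      (f := Prod.fst) (t := Finset.univ.powersetCard k)
      (fun x hx => by
        simp only [Finset.mem_coe, Finset.mem_filter] at hx
        exact Finset.mem_powersetCard_univ.mpr hx.2.1)]
  have hfib : ∀ P ∈ Finset.univ.powersetCard k,
      ((Finset.univ.filter fun pr : Finset Q × Finset Q =>
        pr.1.card = k ∧ pr.2.card = l ∧ Disjoint pr.1 pr.2).filter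
        fun x => x.1 = P).card = ((Fintype.card Q) - k).choose l := by
    intro P hP
    have hPk : P.card = k := Finset.mem_powersetCard_univ.mp hP
    have : (((Finset.univ.filter fun pr : Finset Q × Finset Q =>
        pr.1.card = k ∧ pr.2.card = l ∧ Disjoint pr.1 pr.2).filter
        fun x => x.1 = P)).card = (Pᶜ.powersetCard l).card := by
      apply Finset.card_bij (fun pr _ => pr.2)
      · intro pr hpr
        simp only [Finset.mem_filter, Finset.mem_univ, true_and] at hpr
        obtain ⟨⟨_, hl, hd⟩, h1⟩ := hpr
        refine Finset.mem_powersetCard.mpr ⟨?_, hl⟩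
        intro a ha
        rw [Finset.mem_compl]
        intro haP
        exact (Finset.disjoint_left.mp hd (h1 ▸ haP) ha)
      · intro pr1 h1 pr2 h2 he
        simp only [Finset.mem_filter] at h1 h2
        exact Prod.ext (h1.2.trans h2.2.symm) he
      · intro R hR
        obtain ⟨hsub, hl⟩ := Finset.mem_powersetCard.mp hR
        refine ⟨(P, R), ?_, rfl⟩
        simp only [Finset.mem_filter, Finset.mem_univ, true_and]
        exact ⟨⟨hPk, hl, Finset.disjoint_left.mpr fun a haP haR =>
          (Finset.mem_compl.mp (hsub haR)) haP⟩, trivial⟩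
    rw [this, Finset.card_powersetCard, Finset.card_compl, hPk]
  rw [Finset.sum_congr rfl hfib, Finset.sum_const, Finset.card_powersetCard,
    Finset.card_univ, smul_eq_mul]

lemma count_pairs {Q : Type*} [Fintype Q] [DecidableEq Q] (a b : ℕ) :
    (Finset.univ.filter fun pr : Finset Q × Finset Q =>
        pr.1.Nonempty ∧ pr.2.Nonempty ∧ Disjoint pr.1 pr.2 ∧
        pr.1.card ≤ a ∧ pr.2.card ≤ b).card
      = ∑ k ∈ Finset.Icc 1 a, ∑ l ∈ Finset.Icc 1 b,
          (Fintype.card Q).choose k * ((Fintype.card Q) - k).choose l := by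
  classical
  have hsplit : (Finset.univ.filter fun pr : Finset Q × Finset Q =>
        pr.1.Nonempty ∧ pr.2.Nonempty ∧ Disjoint pr.1 pr.2 ∧
        pr.1.card ≤ a ∧ pr.2.card ≤ b)
      = (Finset.Icc 1 a ×ˢ Finset.Icc 1 b).biUnion (fun kl =>
          Finset.univ.filter fun pr : Finset Q × Finset Q =>
            pr.1.card = kl.1 ∧ pr.2.card = kl.2 ∧ Disjoint pr.1 pr.2) := by
    ext pr
    simp only [Finset.mem_filter, Finset.mem_univ, true_and, Finset.mem_biUnion,
      Finset.mem_product, Finset.mem_Icc]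
    constructor
    · rintro ⟨h1, h2, hd, ha, hb⟩
      exact ⟨(pr.1.card, pr.2.card), ⟨⟨h1.card_pos, ha⟩, ⟨h2.card_pos, hb⟩⟩,
        rfl, rfl, hd⟩
    · rintro ⟨⟨k, l⟩, ⟨⟨hk1, hka⟩, ⟨hl1, hlb⟩⟩, hk, hl, hd⟩
      exact ⟨Finset.card_pos.mp (hk ▸ hk1), Finset.card_pos.mp (hl ▸ hl1), hd,
        hk ▸ hka, hl ▸ hlb⟩
  rw [hsplit, Finset.card_biUnion, Finset.sum_product]
  · exact Finset.sum_congr rfl fun k _ => Finset.sum_congr rfl fun l _ =>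
      count_exact k l
  · intro x hx y hy hxy
    simp only [Finset.disjoint_left, Finset.mem_filter, Finset.mem_univ, true_and]
    rintro pr ⟨h1, h2, -⟩ ⟨h1', h2', -⟩
    exact hxy (Prod.ext (h1.symm.trans h1') (h2.symm.trans h2'))

/-- The left quotient (derivative) of `K` by `x`. -/
def lderiv {A : Type*} (K : Set (List A)) (x : List A) : Set (List A) :=
  {z | x ++ z ∈ K}

lemma sc_eq_card_derivs {A : Type*} (K : Set (List A)) :
    stateComplexity K = Nat.card (Set.range (lderiv K)) := by
  let g : Quotient (rightCong K) → Set (List A) :=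
    Quotient.lift (lderiv K) (fun a b h => Set.ext fun z => h z)
  have hginj : Function.Injective g := by
    intro x y
    induction x using Quotient.ind
    induction y using Quotient.ind
    intro h
    exact Quotient.sound fun z => Set.ext_iff.mp h z
  have hrange : Set.range g = Set.range (lderiv K) := by
    ext d
    constructor
    · rintro ⟨q, rfl⟩
      induction q using Quotient.ind with
      | _ x => exact ⟨x, rfl⟩
    · rintro ⟨x, rfl⟩
      exact ⟨Quotient.mk _ x, rfl⟩
  rw [stateComplexity, ← Nat.card_range_of_injective hginj, hrange]

/-- The "intersection language" of `M` determined by a pair of state sets. -/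
def bLang {A Q : Type*} (M : DFA A Q) (P R : Set Q) : Set (List A) :=
  {z | (∀ p ∈ P, M.evalFrom p z ∈ M.accept) ∧ ∀ r ∈ R, M.evalFrom r z ∉ M.accept}

lemma atom_eq_bLang {A Q : Type*} (M : DFA A Q) (X : Set Q) :
    atom M X = bLang M X Xᶜ := by
  ext z
  constructor
  · intro h
    exact ⟨fun p hp => (h p).mpr hp, fun r hr hacc => hr ((h r).mp hacc)⟩
  · rintro ⟨h1, h2⟩ q
    by_cases hq : q ∈ X
    · exact ⟨fun _ => hq, fun _ => h1 q hq⟩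
    · exact ⟨fun hacc => absurd hacc (h2 q hq), fun h => absurd h hq⟩

lemma lderiv_atom {A Q : Type*} (M : DFA A Q) (S : Set Q) (x : List A) :
    lderiv (atom M S) x
      = bLang M ((fun q => M.evalFrom q x) '' S) ((fun q => M.evalFrom q x) '' Sᶜ) := by
  ext z
  simp only [lderiv, atom, bLang, Set.mem_setOf_eq]
  constructor
  · intro h
    constructor
    · rintro p ⟨q, hq, rfl⟩
      rw [← DFA.evalFrom_of_append]
      exact (h q).mpr hq
    · rintro r ⟨q, hq, rfl⟩ hacc
      rw [← DFA.evalFrom_of_append] at hacc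
      exact hq ((h q).mp hacc)
  · rintro ⟨h1, h2⟩ q
    rw [DFA.evalFrom_of_append]
    by_cases hq : q ∈ S
    · exact ⟨fun _ => hq, fun _ => h1 _ ⟨q, hq, rfl⟩⟩
    · exact ⟨fun hacc => absurd hacc (h2 _ ⟨q, hq, rfl⟩), fun h => absurd h hq⟩

/-- if an atom `A_S` of a minimal DFA with `n ≥ 3` states is
nonempty of maximal state complexity `Ψ(n, |S|)`, then each `A_X` with
`|X| = |S|` is a nonempty atom as well. -/
theorem statement6 {A Q : Type*} [Fintype A] [Fintype Q] (M : DFA A Q)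
    (n : ℕ) (hQ : Fintype.card Q = n) (hn : 3 ≤ n) (hmin : IsMinimal M)
    (S : Set Q) (hne : (atom M S).Nonempty)
    (hsc : stateComplexity (atom M S) = Psi n S.ncard) :
    ∀ X : Set Q, X.ncard = S.ncard → (atom M X).Nonempty := by
  classical
  intro X hX
  set s := S.ncard with hs
  -- trivial cases s = 0 and s = n
  by_cases h0 : s = 0
  · have hS : S = ∅ := (Set.ncard_eq_zero S.toFinite).mp (by rw [← hs]; exact h0)
    have hXe : X = ∅ := (Set.ncard_eq_zero X.toFinite).mp (by rw [hX]; exact h0)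
    rwa [hXe, ← hS]
  by_cases hnn : s = n
  · have huniv : (Set.univ : Set Q).ncard = n := by
      rw [Set.ncard_univ, Nat.card_eq_fintype_card, hQ]
    have hS : S = Set.univ :=
      Set.eq_of_subset_of_ncard_le (Set.subset_univ S) (by omega) (Set.finite_univ)
    have hXu : X = Set.univ :=
      Set.eq_of_subset_of_ncard_le (Set.subset_univ X) (by omega) (Set.finite_univ)
    rwa [hXu, ← hS]
  -- main case 1 ≤ s ≤ n - 1
  have hsn : s ≤ n := by
    have := Set.ncard_le_ncard (Set.subset_univ S) Set.finite_univ
    rwa [Set.ncard_univ, Nat.card_eq_fintype_card, hQ] at this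
  have hs1 : 1 ≤ s := Nat.one_le_iff_ne_zero.mpr h0
  have hslt : s < n := lt_of_le_of_ne hsn hnn
  -- the finite set of admissible pairs
  set Pp : Finset (Finset Q × Finset Q) :=
    Finset.univ.filter (fun pr : Finset Q × Finset Q =>
      pr.1.Nonempty ∧ pr.2.Nonempty ∧ Disjoint pr.1 pr.2 ∧
      pr.1.card ≤ s ∧ pr.2.card ≤ n - s) with hPp
  have hcardPp : Pp.card = ∑ k ∈ Finset.Icc 1 s, ∑ l ∈ Finset.Icc 1 (n - s),
      n.choose k * (n - k).choose l := by
    rw [hPp, count_pairs]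
    rw [hQ]
  set img : Finset Q × Finset Q → Set (List A) :=
    fun pr => bLang M ↑pr.1 ↑pr.2 with himg
  set U : Finset (Set (List A)) := insert ∅ (Pp.image img) with hU
  -- every derivative lies in U
  have hSne : S.Nonempty := Set.nonempty_of_ncard_ne_zero h0
  have hScne : Sᶜ.Nonempty := by
    rw [Set.nonempty_compl]
    intro hSu
    rw [hSu, Set.ncard_univ, Nat.card_eq_fintype_card, hQ] at hs
    exact hnn hs
  have hsub : Set.range (lderiv (atom M S)) ⊆ ↑U := by
    rintro d ⟨x, rfl⟩
    by_cases hd : lderiv (atom M S) x = ∅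
    · rw [hd]
      exact Finset.mem_coe.mpr (Finset.mem_insert_self _ _)
    · obtain ⟨z, hz⟩ := Set.nonempty_iff_ne_empty.mpr hd
      set P : Set Q := (fun q => M.evalFrom q x) '' S with hP
      set R : Set Q := (fun q => M.evalFrom q x) '' Sᶜ with hR
      have hform := lderiv_atom M S x
      have hzB : z ∈ bLang M P R := hform ▸ hz
      have hdisj : Disjoint P R := by
        rw [Set.disjoint_left]
        intro p hp hpR
        exact hzB.2 p hpR (hzB.1 p hp)
      refine Finset.mem_coe.mpr (Finset.mem_insert_of_mem ?_)
      refine Finset.mem_image.mpr ⟨(P.toFinset, R.toFinset), ?_, ?_⟩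
      · rw [hPp]
        simp only [Finset.mem_filter, Finset.mem_univ, true_and]
        refine ⟨?_, ?_, ?_, ?_, ?_⟩
        · rw [Set.toFinset_nonempty]; exact hSne.image _
        · rw [Set.toFinset_nonempty]; exact hScne.image _
        · rwa [Set.disjoint_toFinset]
        · rw [← Set.ncard_eq_toFinset_card']
          exact le_trans (Set.ncard_image_le) (le_of_eq hs.symm)
        · rw [← Set.ncard_eq_toFinset_card']
          refine le_trans (Set.ncard_image_le) ?_
          have := Set.ncard_add_ncard_compl S
          rw [Nat.card_eq_fintype_card, hQ] at this
          omega
      · rw [himg]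
        simp only
        rw [Set.coe_toFinset, Set.coe_toFinset]
        exact hform.symm
  -- cardinality bookkeeping
  have hsc' : stateComplexity (atom M S) = 1 + Pp.card := by
    rw [hsc, Psi, if_neg (by push_neg; exact ⟨h0, hnn⟩), hcardPp]
  have hDcard : (Set.range (lderiv (atom M S))).ncard = 1 + Pp.card := by
    rw [← hsc', sc_eq_card_derivs, Nat.card_coe_set_eq]
  have hle : (Set.range (lderiv (atom M S))).ncard ≤ U.card := by
    rw [← Set.ncard_coe_finset U]
    exact Set.ncard_le_ncard hsub (U.finite_toSet)
  have hempty_not : (∅ : Set (List A)) ∉ Pp.image img := by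
    intro hmem
    have hUcard : U.card = (Pp.image img).card := by
      rw [hU, Finset.insert_eq_self.mpr hmem]
    have h1 : (Pp.image img).card ≤ Pp.card := Finset.card_image_le
    omega
  -- conclude
  have hXne : X.Nonempty := Set.nonempty_of_ncard_ne_zero (by omega)
  have hXcne : Xᶜ.Nonempty := by
    rw [Set.nonempty_compl]
    intro hXu
    rw [hXu, Set.ncard_univ, Nat.card_eq_fintype_card, hQ] at hX
    omega
  have hXmem : (X.toFinset, Xᶜ.toFinset) ∈ Pp := by
    rw [hPp]
    simp only [Finset.mem_filter, Finset.mem_univ, true_and]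
    have hXc : Xᶜ.ncard = n - s := by
      have := Set.ncard_add_ncard_compl X
      rw [Nat.card_eq_fintype_card, hQ] at this
      omega
    refine ⟨Set.toFinset_nonempty.mpr hXne, Set.toFinset_nonempty.mpr hXcne,
      Set.disjoint_toFinset.mpr disjoint_compl_right, ?_, ?_⟩
    · rw [← Set.ncard_eq_toFinset_card']; omega
    · rw [← Set.ncard_eq_toFinset_card']; omega
  have himgX : img (X.toFinset, Xᶜ.toFinset) = atom M X := by
    rw [himg]
    simp only
    rw [Set.coe_toFinset, Set.coe_toFinset, atom_eq_bLang]
  rw [Set.nonempty_iff_ne_empty]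
  intro hXempty
  apply hempty_not
  refine Finset.mem_image.mpr ⟨(X.toFinset, Xᶜ.toFinset), hXmem, ?_⟩
  rw [himgX, hXempty]
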